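/- For every integer k ≥ 1, the total domination number of the hypercube of dimension 2^k + 1 satisfies γ_t(Q_{2^k+1}) = 2^{2^k − k + 1}. -/

import Mathlib

open SimpleGraph

/-- The complete graph on two vertices. -/
abbrev K2 : SimpleGraph (Fin 2) := ⊤

/-- `S` is a dominating set of `G`: every vertex not in `S` is adjacent to a vertex of `S`. -/
def IsDominatingSet {V : Type*} (G : SimpleGraph V) (S : Finset V) : Prop :=
  ∀ v : V, v ∉ S → ∃ u ∈ S, G.Adj v u

/-- `S` is a total dominating set of `G`: every vertex is adjacent to a vertex of `S`. -/
def IsTotalDominatingSet {V : Type*} (G : SimpleGraph V) (S : Finset V) : Prop :=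
  ∀ v : V, ∃ u ∈ S, G.Adj v u

/-- The domination number of `G`. -/
noncomputable def dominationNumber {V : Type*} (G : SimpleGraph V) : ℕ :=
  sInf {n : ℕ | ∃ S : Finset V, IsDominatingSet G S ∧ S.card = n}

/-- The total domination number of `G`. -/
noncomputable def totalDominationNumber {V : Type*} (G : SimpleGraph V) : ℕ :=
  sInf {n : ℕ | ∃ S : Finset V, IsTotalDominatingSet G S ∧ S.card = n}

/-- The `n`-dimensional hypercube: vertices are binary strings of length `n`,
two vertices are adjacent iff they differ in exactly one coordinate. -/
def hypercube (n : ℕ) : SimpleGraph (Fin n → Bool) where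
  Adj x y := hammingDist x y = 1
  symm := ⟨fun x y h => by simpa [hammingDist_comm] using h⟩
  loopless := ⟨fun x h => by simp [hammingDist_self] at h⟩

/-! ### Auxiliary material for the proof -/

namespace TotalDomHypercubeAux

open Finset

lemma hd_def {m : ℕ} (x y : Fin m → Bool) :
    hammingDist x y = (univ.filter fun i => x i ≠ y i).card := rfl

lemma hd_update {m : ℕ} (x : Fin m → Bool) (i : Fin m) :
    hammingDist x (Function.update x i (!x i)) = 1 := by
  rw [hd_def]
  have h : (univ.filter fun j => x j ≠ Function.update x i (!x i) j) = {i} := by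
    ext j
    simp only [mem_filter, mem_univ, true_and, mem_singleton]
    constructor
    · intro h; by_contra hj; rw [Function.update_of_ne hj] at h; exact h rfl
    · rintro rfl; simp
  rw [h, card_singleton]

lemma nbhd_eq_image {m : ℕ} (y : Fin m → Bool) :
    (univ.filter fun z => hammingDist y z = 1)
      = univ.image (fun i => Function.update y i (!y i)) := by
  ext z
  simp only [mem_filter, mem_univ, true_and, mem_image]
  constructor
  · intro h
    rw [hd_def] at h
    obtain ⟨i, hi⟩ := Finset.card_eq_one.mp h
    have hiff : ∀ j, (y j ≠ z j) ↔ j = i := by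
      intro j
      rw [show (j = i) = (j ∈ ({i} : Finset (Fin m))) from (by simp), ← hi, mem_filter]
      simp
    refine ⟨i, ?_⟩
    funext j
    by_cases hj : j = i
    · subst hj
      rw [Function.update_self]
      have := (hiff j).mpr rfl
      cases hy : y j <;> cases hz : z j <;> simp_all
    · rw [Function.update_of_ne hj]
      by_contra hne
      exact hj ((hiff j).mp (fun hh => hne hh))
  · rintro ⟨i, rfl⟩
    exact hd_update y i

lemma card_nbhd {m : ℕ} (y : Fin m → Bool) :
    (univ.filter fun z => hammingDist y z = 1).card = m := by
  rw [nbhd_eq_image, Finset.card_image_of_injective _ ?_, card_univ, Fintype.card_fin]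
  intro i j h
  by_contra hne
  have h1 := congrFun h i
  simp only [] at h1
  rw [Function.update_self, Function.update_of_ne (fun hh => hne hh)] at h1
  cases y i <;> simp_all

lemma even_card_invol {α : Type*} [DecidableEq α] (φ : α → α) :
    ∀ t : Finset α, (∀ a ∈ t, φ a ∈ t) → (∀ a ∈ t, φ (φ a) = a) →
      (∀ a ∈ t, φ a ≠ a) → Even t.card := by
  intro t
  induction t using Finset.strongInduction with
  | _ t ih =>
    intro hmem hinv hne
    rcases t.eq_empty_or_nonempty with rfl | ⟨a, ha⟩
    · simp
    · have hφa : φ a ∈ t := hmem a ha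
      have hnea : φ a ≠ a := hne a ha
      have hφa' : φ a ∈ t.erase a := mem_erase.mpr ⟨hnea, hφa⟩
      have hsub1 : ((t.erase a).erase (φ a)) ⊆ t :=
        (erase_subset _ _).trans (erase_subset _ _)
      have hss : ((t.erase a).erase (φ a)) ⊂ t := by
        refine (Finset.ssubset_iff_of_subset hsub1).mpr ⟨a, ha, ?_⟩
        simp
      have hmem' : ∀ b ∈ (t.erase a).erase (φ a), φ b ∈ (t.erase a).erase (φ a) := by
        intro b hb
        have h := mem_erase.mp hb
        have hb1 := h.1
        have hb2 := (mem_erase.mp h.2).1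
        have hb3 := (mem_erase.mp h.2).2
        refine mem_erase.mpr ⟨?_, mem_erase.mpr ⟨?_, hmem b hb3⟩⟩
        · intro hc
          exact hb2 (by rw [← hinv b hb3, hc, hinv a ha])
        · intro hc
          exact hb1 (by rw [← hinv b hb3, hc])
      have hinv' : ∀ b ∈ (t.erase a).erase (φ a), φ (φ b) = b :=
        fun b hb => hinv b (hsub1 hb)
      have hne' : ∀ b ∈ (t.erase a).erase (φ a), φ b ≠ b :=
        fun b hb => hne b (hsub1 hb)
      have hev := ih _ hss hmem' hinv' hne'
      have hc1 : (t.erase a).card = t.card - 1 := card_erase_of_mem ha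
      have hc2 : ((t.erase a).erase (φ a)).card = (t.erase a).card - 1 :=
        card_erase_of_mem hφa'
      have hpos1 : 1 ≤ t.card := card_pos.mpr ⟨a, ha⟩
      have hpos2 : 1 ≤ (t.erase a).card := card_pos.mpr ⟨φ a, hφa'⟩
      obtain ⟨n, hn⟩ := hev
      exact ⟨n + 1, by omega⟩

lemma common_even {m : ℕ} (s z : Fin m → Bool) (hne : s ≠ z) :
    Even ((univ.filter fun y => hammingDist z y = 1 ∧ hammingDist y s = 1).card) := by
  apply even_card_invol (fun y => fun i => xor (xor (s i) (z i)) (y i))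
  · intro y hy
    simp only [mem_filter, mem_univ, true_and] at hy ⊢
    obtain ⟨h1, h2⟩ := hy
    constructor
    · show hammingDist z _ = 1
      rw [hammingDist] at h2 ⊢
      rw [← h2]
      congr 1
      apply filter_congr
      intro i _
      have : ∀ a b c : Bool, ((b ≠ xor (xor a b) c) ↔ (c ≠ a)) := by decide
      simpa using this (s i) (z i) (y i)
    · show hammingDist _ s = 1
      rw [hammingDist] at h1 ⊢
      rw [← h1]
      congr 1
      apply filter_congr
      intro i _
      have : ∀ a b c : Bool, ((xor (xor a b) c ≠ a) ↔ (b ≠ c)) := by decide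
      simpa using this (s i) (z i) (y i)
  · intro y _
    funext i
    have : ∀ a b c : Bool, xor (xor a b) (xor (xor a b) c) = c := by decide
    exact this (s i) (z i) (y i)
  · intro y _ h
    apply hne
    funext i
    have hcf := congrFun h i
    have : ∀ a b c : Bool, xor (xor a b) c = c → a = b := by decide
    exact this (s i) (z i) (y i) hcf

/-- The key counting lower bound: in odd dimension `m`, any total dominating set `S`
of the hypercube satisfies `2 ^ m ≤ (m - 1) * |S|`. -/
lemma lb {m : ℕ} (hm3 : 3 ≤ m) (hmo : m % 2 = 1) (S : Finset (Fin m → Bool))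
    (hS : ∀ v : Fin m → Bool, ∃ u ∈ S, hammingDist v u = 1) :
    2 ^ m ≤ (m - 1) * S.card := by
  classical
  set t : (Fin m → Bool) → ℕ := fun y => (S.filter fun s => hammingDist y s = 1).card
    with ht
  have hcardV : Fintype.card (Fin m → Bool) = 2 ^ m := by simp
  have hcu : (univ : Finset (Fin m → Bool)).card = 2 ^ m := by
    rw [card_univ, hcardV]
  have ht1 : ∀ y, 1 ≤ t y := by
    intro y
    obtain ⟨u, hu, hd⟩ := hS y
    exact card_pos.mpr ⟨u, mem_filter.mpr ⟨hu, hd⟩⟩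
  have htm : ∀ y, t y ≤ m := by
    intro y
    have h1 : (S.filter fun s => hammingDist y s = 1)
        ⊆ (univ.filter fun s => hammingDist y s = 1) :=
      filter_subset_filter _ (subset_univ S)
    exact le_trans (card_le_card h1) (le_of_eq (card_nbhd y))
  have hsum_t : ∑ y, t y = m * S.card := by
    calc ∑ y, t y = ∑ y, ∑ s ∈ S, (if hammingDist y s = 1 then 1 else 0) := by
          apply Finset.sum_congr rfl; intro y _; rw [ht]; exact card_filter _ _
      _ = ∑ s ∈ S, ∑ y, (if hammingDist y s = 1 then 1 else 0) := Finset.sum_comm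
      _ = ∑ s ∈ S, (univ.filter fun y => hammingDist y s = 1).card := by
          apply Finset.sum_congr rfl; intro s _; rw [← card_filter]
      _ = ∑ s ∈ S, m := by
          apply Finset.sum_congr rfl; intro s _
          rw [show (univ.filter fun y => hammingDist y s = 1)
              = (univ.filter fun y => hammingDist s y = 1) from
            filter_congr (fun y _ => by rw [hammingDist_comm])]
          exact card_nbhd s
      _ = m * S.card := by rw [sum_const, smul_eq_mul, mul_comm]
  set P : ℕ := ∑ z ∈ univ.filter (fun z => z ∉ S),
      ∑ y ∈ univ.filter (fun y => hammingDist z y = 1), t y with hP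
  have per_z : ∀ z, z ∉ S →
      m + 1 ≤ ∑ y ∈ univ.filter (fun y => hammingDist z y = 1), t y := by
    intro z hz
    have hge : m ≤ ∑ y ∈ univ.filter (fun y => hammingDist z y = 1), t y := by
      calc m = (univ.filter fun y => hammingDist z y = 1).card := (card_nbhd z).symm
        _ = ∑ y ∈ univ.filter (fun y => hammingDist z y = 1), 1 := by
            rw [sum_const, smul_eq_mul, mul_one]
        _ ≤ _ := Finset.sum_le_sum (fun y _ => ht1 y)
    have heven : 2 ∣ ∑ y ∈ univ.filter (fun y => hammingDist z y = 1), t y := by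
      have hswap : ∑ y ∈ univ.filter (fun y => hammingDist z y = 1), t y
          = ∑ s ∈ S, ((univ.filter fun y =>
              hammingDist z y = 1 ∧ hammingDist y s = 1).card) := by
        calc ∑ y ∈ univ.filter (fun y => hammingDist z y = 1), t y
            = ∑ y ∈ univ.filter (fun y => hammingDist z y = 1),
                ∑ s ∈ S, (if hammingDist y s = 1 then 1 else 0) := by
              apply Finset.sum_congr rfl; intro y _; rw [ht]; exact card_filter _ _
          _ = ∑ s ∈ S, ∑ y ∈ univ.filter (fun y => hammingDist z y = 1),
                (if hammingDist y s = 1 then 1 else 0) := Finset.sum_comm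
          _ = ∑ s ∈ S, ((univ.filter (fun y => hammingDist z y = 1)).filter
                (fun y => hammingDist y s = 1)).card := by
              apply Finset.sum_congr rfl; intro s _; rw [← card_filter]
          _ = _ := by
              apply Finset.sum_congr rfl; intro s _; rw [filter_filter]
      rw [hswap]
      apply Finset.dvd_sum
      intro s hs
      have hne : s ≠ z := fun h => hz (h ▸ hs)
      obtain ⟨c, hc⟩ := common_even s z hne
      exact ⟨c, by omega⟩
    obtain ⟨c, hc⟩ := heven
    omega
  have hA : (univ.filter fun z => z ∉ S).card + S.card = 2 ^ m := by
    have h := Finset.card_filter_add_card_filter_not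
      (s := (univ : Finset (Fin m → Bool))) (p := fun z => z ∈ S)
    rw [hcu] at h
    have h2 : (univ.filter fun z => z ∈ S) = S := by
      ext x; simp
    rw [h2] at h
    omega
  have hP_lower : (m + 1) * 2 ^ m ≤ P + (m + 1) * S.card := by
    have h1 : (univ.filter fun z => z ∉ S).card * (m + 1) ≤ P := by
      rw [hP]
      calc (univ.filter fun z => z ∉ S).card * (m + 1)
          = ∑ _z ∈ univ.filter (fun z => z ∉ S), (m + 1) := by
            rw [sum_const, smul_eq_mul]
        _ ≤ _ := Finset.sum_le_sum (fun z hz => per_z z (by simpa using (mem_filter.mp hz).2))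
    calc (m + 1) * 2 ^ m
        = (m + 1) * ((univ.filter fun z => z ∉ S).card + S.card) := by rw [hA]
      _ = (univ.filter fun z => z ∉ S).card * (m + 1) + (m + 1) * S.card := by ring
      _ ≤ P + (m + 1) * S.card := by
          exact Nat.add_le_add_right h1 _
  have hsplit_y : ∀ y, (univ.filter fun z => z ∉ S ∧ hammingDist z y = 1).card + t y = m := by
    intro y
    have hNy := Finset.card_filter_add_card_filter_not
      (s := univ.filter (fun z => hammingDist z y = 1)) (p := fun z => z ∈ S)
    have hNcard : (univ.filter (fun z => hammingDist z y = 1)).card = m := by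
      rw [show (univ.filter fun z => hammingDist z y = 1)
          = (univ.filter fun z => hammingDist y z = 1) from
        filter_congr (fun w _ => by rw [hammingDist_comm])]
      exact card_nbhd y
    have hin : ((univ.filter (fun z => hammingDist z y = 1)).filter (fun z => z ∈ S)).card
        = t y := by
      rw [ht]
      congr 1
      ext w
      simp only [mem_filter, mem_univ, true_and]
      constructor
      · rintro ⟨h1, h2⟩; exact ⟨h2, by rwa [hammingDist_comm]⟩
      · rintro ⟨h1, h2⟩; exact ⟨by rwa [hammingDist_comm], h1⟩
    have hout : ((univ.filter (fun z => hammingDist z y = 1)).filter (fun z => ¬ z ∈ S))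
        = (univ.filter fun z => z ∉ S ∧ hammingDist z y = 1) := by
      rw [filter_filter]
      apply filter_congr
      intro w _
      tauto
    rw [hNcard, hin, hout] at hNy
    omega
  have hP_eq : P + ∑ y, t y * t y = m * (m * S.card) := by
    have hstep : P = ∑ y, (univ.filter fun z => z ∉ S ∧ hammingDist z y = 1).card * t y := by
      rw [hP]
      calc ∑ z ∈ univ.filter (fun z => z ∉ S),
            ∑ y ∈ univ.filter (fun y => hammingDist z y = 1), t y
          = ∑ z ∈ univ.filter (fun z => z ∉ S),
            ∑ y, (if hammingDist z y = 1 then t y else 0) := by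
            apply Finset.sum_congr rfl; intro z _; rw [sum_filter]
        _ = ∑ y, ∑ z ∈ univ.filter (fun z => z ∉ S),
            (if hammingDist z y = 1 then t y else 0) := Finset.sum_comm
        _ = ∑ y, (univ.filter fun z => z ∉ S ∧ hammingDist z y = 1).card * t y := by
            apply Finset.sum_congr rfl; intro y _
            rw [← sum_filter, sum_const, smul_eq_mul, filter_filter]
    rw [hstep, ← Finset.sum_add_distrib]
    calc ∑ y, ((univ.filter fun z => z ∉ S ∧ hammingDist z y = 1).card * t y + t y * t y)
        = ∑ y, m * t y := by
          apply Finset.sum_congr rfl; intro y _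
          nlinarith [hsplit_y y]
      _ = m * ∑ y, t y := by rw [Finset.mul_sum]
      _ = m * (m * S.card) := by rw [hsum_t]
  have hsq : 3 * (m * S.card) ≤ (∑ y, t y * t y) + 2 * 2 ^ m := by
    have hpoint : ∀ n : ℕ, 1 ≤ n → 3 * n ≤ n * n + 2 := by
      intro n hn
      rcases Nat.lt_or_ge n 3 with h | h
      · interval_cases n <;> norm_num
      · have : 3 * n ≤ n * n := Nat.mul_le_mul_right n h
        omega
    calc 3 * (m * S.card) = 3 * ∑ y, t y := by rw [hsum_t]
      _ = ∑ y, 3 * t y := by rw [Finset.mul_sum]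
      _ ≤ ∑ y, (t y * t y + 2) := Finset.sum_le_sum (fun y _ => hpoint (t y) (ht1 y))
      _ = (∑ y, t y * t y) + 2 * 2 ^ m := by
          rw [Finset.sum_add_distrib, sum_const, smul_eq_mul, hcu]
          ring
  have hfin : (2 : ℤ) ^ m ≤ ((m : ℤ) - 1) * (S.card : ℤ) := by
    have h1 : ((m : ℤ) + 1) * 2 ^ m ≤ (P : ℤ) + ((m : ℤ) + 1) * (S.card : ℤ) := by
      exact_mod_cast hP_lower
    have h2 : (P : ℤ) + ((∑ y, t y * t y : ℕ) : ℤ) = (m : ℤ) * ((m : ℤ) * S.card) := by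
      exact_mod_cast hP_eq
    have h3 : 3 * ((m : ℤ) * S.card) ≤ ((∑ y, t y * t y : ℕ) : ℤ) + 2 * 2 ^ m := by
      exact_mod_cast hsq
    have hm3' : (3 : ℤ) ≤ (m : ℤ) := by exact_mod_cast hm3
    have hkey : ((m : ℤ) - 1) * (2 : ℤ) ^ m ≤ ((m : ℤ) - 1) * (((m : ℤ) - 1) * S.card) := by
      nlinarith [h1, h2, h3]
    have hmpos : (0 : ℤ) < (m : ℤ) - 1 := by linarith
    exact le_of_mul_le_mul_left hkey hmpos
  have hcast : (2 : ℤ) ^ m ≤ (((m - 1) * S.card : ℕ) : ℤ) := by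
    rwa [Nat.cast_mul, Nat.cast_sub (by omega : 1 ≤ m)]
  exact_mod_cast hcast

/-- Construction of a total dominating set of the right size, via the parity-check
(syndrome) construction: label the `2^k + 1` coordinates by `Option (Fin k → ZMod 2)`
(so the zero vector receives two labels) and take all vertices of syndrome zero. -/
lemma upper_exists (k : ℕ) :
    ∃ S : Finset (Fin (2 ^ k + 1) → Bool),
      IsTotalDominatingSet (hypercube (2 ^ k + 1)) S ∧ S.card = 2 ^ (2 ^ k + 1 - k) := by
  classical
  have hcardW : Fintype.card (Fin k → ZMod 2) = 2 ^ k := by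
    rw [Fintype.card_fun, ZMod.card, Fintype.card_fin]
  have hιcard : Fintype.card (Fin (2 ^ k + 1)) = Fintype.card (Option (Fin k → ZMod 2)) := by
    rw [Fintype.card_option, hcardW, Fintype.card_fin]
  set ι : Fin (2 ^ k + 1) ≃ Option (Fin k → ZMod 2) := Fintype.equivOfCardEq hιcard with hι
  set c : Fin (2 ^ k + 1) → (Fin k → ZMod 2) := fun i => (ι i).elim 0 id with hc
  set σ : (Fin (2 ^ k + 1) → Bool) → (Fin k → ZMod 2) :=
    fun x => ∑ i, (if x i then c i else 0) with hσ
  have hvv : ∀ v : Fin k → ZMod 2, v + v = 0 := by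
    intro v; funext j
    have : ∀ a : ZMod 2, a + a = 0 := by decide
    exact this (v j)
  have hboolif : ∀ (a b : Bool) (v : Fin k → ZMod 2), v + v = 0 →
      (if xor a b = true then v else 0)
        = (if a = true then v else 0) + (if b = true then v else 0) := by
    intro a b v hv
    cases a <;> cases b <;> simp [hv]
  have hxor : ∀ x u : Fin (2 ^ k + 1) → Bool,
      σ (fun i => xor (x i) (u i)) = σ x + σ u := by
    intro x u
    rw [hσ]
    simp only []
    rw [← Finset.sum_add_distrib]
    exact Finset.sum_congr rfl (fun i _ => hboolif (x i) (u i) (c i) (hvv (c i)))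
  have hdelta : ∀ i, σ (Function.update (fun _ => false) i true) = c i := by
    intro i
    rw [hσ]
    simp only []
    rw [Finset.sum_eq_single_of_mem i (mem_univ i)]
    · rw [Function.update_self, if_pos rfl]
    · intro j _ hj
      rw [Function.update_of_ne hj]
      simp
  have hupd : ∀ (x : Fin (2 ^ k + 1) → Bool) i,
      σ (Function.update x i (!x i)) = σ x + c i := by
    intro x i
    have hfun : Function.update x i (!x i)
        = fun j => xor (x j) (Function.update (fun _ => false) i true j) := by
      funext j
      by_cases hj : j = i
      · subst hj; rw [Function.update_self, Function.update_self]; cases x j <;> rfl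
      · rw [Function.update_of_ne hj, Function.update_of_ne hj]; cases x j <;> rfl
    rw [hfun, hxor, hdelta]
  have hzero : σ (fun _ => false) = 0 := by
    rw [hσ]; simp
  have hsurj : ∀ s : Fin k → ZMod 2, ∃ x₀, σ x₀ = s := by
    intro s
    by_cases hs : s = 0
    · exact ⟨fun _ => false, by rw [hzero, hs]⟩
    · refine ⟨Function.update (fun _ => false) (ι.symm (some s)) true, ?_⟩
      have h := hupd (fun _ => false) (ι.symm (some s))
      simp only [Bool.not_false] at h
      rw [h, hzero, zero_add, hc]
      simp [Equiv.apply_symm_apply]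
  set S₀ : Finset (Fin (2 ^ k + 1) → Bool) := univ.filter (fun x => σ x = 0) with hS₀
  have hfib : ∀ s : Fin k → ZMod 2,
      (univ.filter fun x => σ x = s).card = S₀.card := by
    intro s
    obtain ⟨t₀, ht₀⟩ := hsurj s
    apply Finset.card_bij (fun x _ => fun i => xor (x i) (t₀ i))
    · intro x hx
      have hx' := (mem_filter.mp hx).2
      rw [hS₀, mem_filter]
      refine ⟨mem_univ _, ?_⟩
      rw [hxor, hx', ht₀, hvv]
    · intro x hx y hy h
      funext i
      have hcf := congrFun h i
      have hcan : ∀ a b u : Bool, xor a u = xor b u → a = b := by decide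
      exact hcan (x i) (y i) (t₀ i) hcf
    · intro y hy
      have hy' := (mem_filter.mp hy).2
      refine ⟨fun i => xor (y i) (t₀ i), ?_, ?_⟩
      · rw [mem_filter]
        refine ⟨mem_univ _, ?_⟩
        rw [hxor, hy', ht₀, zero_add]
      · funext i
        have hcc : ∀ a u : Bool, xor (xor a u) u = a := by decide
        simpa using (hcc (y i) (t₀ i)).symm
  have hL : (univ : Finset (Fin (2 ^ k + 1) → Bool)).card = 2 ^ (2 ^ k + 1) := by
    rw [card_univ]
    simp
  have hcount : 2 ^ k * S₀.card = 2 ^ (2 ^ k + 1) := by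
    have h1 : (univ : Finset (Fin (2 ^ k + 1) → Bool)).card
        = ∑ s ∈ (univ : Finset (Fin k → ZMod 2)), (univ.filter fun x => σ x = s).card :=
      Finset.card_eq_sum_card_fiberwise (fun x _ => mem_univ _)
    calc 2 ^ k * S₀.card
        = ∑ _s ∈ (univ : Finset (Fin k → ZMod 2)), S₀.card := by
          rw [sum_const, smul_eq_mul, card_univ, hcardW]
      _ = ∑ s ∈ (univ : Finset (Fin k → ZMod 2)), (univ.filter fun x => σ x = s).card :=
          Finset.sum_congr rfl (fun s _ => (hfib s).symm)
      _ = (univ : Finset (Fin (2 ^ k + 1) → Bool)).card := h1.symm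
      _ = 2 ^ (2 ^ k + 1) := hL
  have hcard : S₀.card = 2 ^ (2 ^ k + 1 - k) := by
    have hkk : k ≤ 2 ^ k := le_of_lt (Nat.lt_two_pow_self (n := k))
    have hsplit : 2 ^ (2 ^ k + 1) = 2 ^ k * 2 ^ (2 ^ k + 1 - k) := by
      rw [← pow_add]
      congr 1
      omega
    apply Nat.eq_of_mul_eq_mul_left (show 0 < 2 ^ k from pow_pos (by norm_num) k)
    rw [hcount, hsplit]
  refine ⟨S₀, ?_, hcard⟩
  intro v
  by_cases h0 : σ v = 0
  · refine ⟨Function.update v (ι.symm none) (!v (ι.symm none)), ?_, hd_update v _⟩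
    rw [hS₀, mem_filter]
    refine ⟨mem_univ _, ?_⟩
    rw [hupd, h0, zero_add, hc]
    simp [Equiv.apply_symm_apply]
  · refine ⟨Function.update v (ι.symm (some (σ v))) (!v (ι.symm (some (σ v)))), ?_, hd_update v _⟩
    rw [hS₀, mem_filter]
    refine ⟨mem_univ _, ?_⟩
    rw [hupd]
    have hcc : c (ι.symm (some (σ v))) = σ v := by
      rw [hc]; simp [Equiv.apply_symm_apply]
    rw [hcc, hvv]

end TotalDomHypercubeAux

/-- For every `k ≥ 1`, `γ_t(Q_{2^k+1}) = 2^(2^k - k + 1)`. -/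
theorem totalDomination_hypercube_pow_add_one (k : ℕ) (hk : 1 ≤ k) :
    totalDominationNumber (hypercube (2 ^ k + 1)) = 2 ^ (2 ^ k - k + 1) := by
  classical
  have hkk : k ≤ 2 ^ k := le_of_lt (Nat.lt_two_pow_self (n := k))
  have hexp : 2 ^ k + 1 - k = 2 ^ k - k + 1 := by omega
  obtain ⟨S₀, hS₀, hcard₀⟩ := TotalDomHypercubeAux.upper_exists k
  rw [hexp] at hcard₀
  have hmem : 2 ^ (2 ^ k - k + 1) ∈
      {n : ℕ | ∃ S : Finset (Fin (2 ^ k + 1) → Bool),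
        IsTotalDominatingSet (hypercube (2 ^ k + 1)) S ∧ S.card = n} :=
    ⟨S₀, hS₀, hcard₀⟩
  apply le_antisymm
  · exact Nat.sInf_le hmem
  · apply le_csInf ⟨_, hmem⟩
    rintro n ⟨S, hS, rfl⟩
    have hm3 : 3 ≤ 2 ^ k + 1 := by
      have : 2 ≤ 2 ^ k := by
        calc 2 = 2 ^ 1 := rfl
        _ ≤ 2 ^ k := Nat.pow_le_pow_right (by norm_num) hk
      omega
    have hmo : (2 ^ k + 1) % 2 = 1 := by
      have : 2 ∣ 2 ^ k := dvd_pow_self 2 (by omega : k ≠ 0)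
      omega
    have hlb := TotalDomHypercubeAux.lb hm3 hmo S (fun v => hS v)
    have hsub : 2 ^ k + 1 - 1 = 2 ^ k := by omega
    rw [hsub] at hlb
    have hsplit : 2 ^ (2 ^ k + 1) = 2 ^ (2 ^ k - k + 1) * 2 ^ k := by
      rw [← pow_add]
      congr 1
      omega
    rw [hsplit] at hlb
    rw [mul_comm] at hlb
    exact Nat.le_of_mul_le_mul_left hlb (pow_pos (by norm_num) k)
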